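/- Let (S_ξ)_{ξ∈Ξ} be a nondegenerate family of nonzero symmetric gauges in ℝ^N and let S be a nonzero gauge belonging to π↑(Ξ). Then S = ⋂_{x ∈ ℝ^N, x ≠ 0} h_S(x) · J(x), where J(x) denotes the closed convex hull of ⋃_{ξ∈Ξ} (1/h_{S_ξ}(x)) · S_ξ. -/

import Mathlib

open Pointwise

/-- The support function `h_K(x) = sup{⟨x, y⟩ : y ∈ K}` of `K ⊆ ℝ^N`. -/
noncomputable def suppFn {N : ℕ} (K : Set (EuclideanSpace ℝ (Fin N)))
    (x : EuclideanSpace ℝ (Fin N)) : ℝ :=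
  sSup ((fun y => (inner ℝ x y : ℝ)) '' K)

/-- A gauge in `ℝ^N`: a compact convex set containing the origin. -/
def IsGauge {N : ℕ} (K : Set (EuclideanSpace ℝ (Fin N))) : Prop :=
  IsCompact K ∧ Convex ℝ K ∧ (0 : EuclideanSpace ℝ (Fin N)) ∈ K

/-- A family of gauges is nondegenerate if `sup_ξ ‖A‖_{S_ξ} < +∞` for every
linear operator `A` on `ℝ^N`, i.e. there is `C` such that for each `ξ` and each
`x ∈ S ξ` the gauge value `‖A x‖_{S ξ} = inf{β > 0 : A x ∈ β • S ξ}` is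
attained below `C`. -/
def Nondegenerate {N : ℕ} {Ξ : Type*}
    (S : Ξ → Set (EuclideanSpace ℝ (Fin N))) : Prop :=
  ∀ A : EuclideanSpace ℝ (Fin N) →ₗ[ℝ] EuclideanSpace ℝ (Fin N),
    ∃ C : ℝ, ∀ ξ, ∀ x ∈ S ξ, ∃ β : ℝ, 0 < β ∧ β ≤ C ∧ A x ∈ β • S ξ

/-- Closedness of a collection of (nonempty compact) subsets of `ℝ^N` in the
topology of the Hausdorff metric. -/
def IsHausdorffClosed {N : ℕ} (C : Set (Set (EuclideanSpace ℝ (Fin N)))) : Prop :=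
  IsClosed {K : TopologicalSpace.NonemptyCompacts (EuclideanSpace ℝ (Fin N)) |
    (K : Set (EuclideanSpace ℝ (Fin N))) ∈ C}

/-- `π↑(F)`: the least Hausdorff-closed cone of gauges containing `F` that is
closed under the join `K ∨ L = conv (K ∪ L)`. -/
def piUp {N : ℕ} (F : Set (Set (EuclideanSpace ℝ (Fin N)))) :
    Set (Set (EuclideanSpace ℝ (Fin N))) :=
  ⋂₀ {C | (∀ K ∈ C, IsGauge K) ∧ IsHausdorffClosed C ∧ F ⊆ C ∧
      (∀ K ∈ C, ∀ L ∈ C, K + L ∈ C) ∧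
      (∀ K ∈ C, ∀ α : ℝ, 0 ≤ α → α • K ∈ C) ∧
      (∀ K ∈ C, ∀ L ∈ C, convexHull ℝ (K ∪ L) ∈ C)}

/-- `π↓(F)`: the least Hausdorff-closed cone of gauges containing `F` that is
closed under the meet `K ∧ L = K ∩ L`. -/
def piDown {N : ℕ} (F : Set (Set (EuclideanSpace ℝ (Fin N)))) :
    Set (Set (EuclideanSpace ℝ (Fin N))) :=
  ⋂₀ {C | (∀ K ∈ C, IsGauge K) ∧ IsHausdorffClosed C ∧ F ⊆ C ∧
      (∀ K ∈ C, ∀ L ∈ C, K + L ∈ C) ∧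
      (∀ K ∈ C, ∀ α : ℝ, 0 ≤ α → α • K ∈ C) ∧
      (∀ K ∈ C, ∀ L ∈ C, K ∩ L ∈ C)}

/-- `π(F)`: the least Hausdorff-closed cone of gauges containing `F` that is
closed under both the join and the meet. -/
def piBoth {N : ℕ} (F : Set (Set (EuclideanSpace ℝ (Fin N)))) :
    Set (Set (EuclideanSpace ℝ (Fin N))) :=
  ⋂₀ {C | (∀ K ∈ C, IsGauge K) ∧ IsHausdorffClosed C ∧ F ⊆ C ∧
      (∀ K ∈ C, ∀ L ∈ C, K + L ∈ C) ∧
      (∀ K ∈ C, ∀ α : ℝ, 0 ≤ α → α • K ∈ C) ∧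
      (∀ K ∈ C, ∀ L ∈ C, convexHull ℝ (K ∪ L) ∈ C) ∧
      (∀ K ∈ C, ∀ L ∈ C, K ∩ L ∈ C)}

/-! ### Auxiliary development -/

open Metric Filter TopologicalSpace

namespace PiUpAux

variable {N : ℕ}
local notation "E" => EuclideanSpace ℝ (Fin N)

lemma innerCont (x : E) : Continuous fun y : E => (inner ℝ x y : ℝ) :=
  continuous_const.inner continuous_id

lemma bddAbove_img {K : Set E} (hK : IsCompact K) (x : E) :
    BddAbove ((fun y => (inner ℝ x y : ℝ)) '' K) :=
  (hK.image (innerCont x)).bddAbove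

lemma le_suppFn {K : Set E} (hK : IsCompact K) {x y : E} (hy : y ∈ K) :
    (inner ℝ x y : ℝ) ≤ suppFn K x :=
  le_csSup (bddAbove_img hK x) ⟨y, hy, rfl⟩

lemma suppFn_le {K : Set E} (hne : K.Nonempty) {x : E} {c : ℝ}
    (h : ∀ y ∈ K, (inner ℝ x y : ℝ) ≤ c) : suppFn K x ≤ c :=
  csSup_le (hne.image _) (by rintro _ ⟨y, hy, rfl⟩; exact h y hy)

lemma suppFn_nonneg {K : Set E} (hK : IsCompact K) (h0 : (0:E) ∈ K) (x : E) :
    0 ≤ suppFn K x := by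
  have := le_suppFn hK h0 (x := x); simpa using this

lemma exists_suppFn_eq {K : Set E} (hK : IsCompact K) (hne : K.Nonempty) (x : E) :
    ∃ y ∈ K, suppFn K x = (inner ℝ x y : ℝ) := by
  obtain ⟨y, hy, hmax⟩ := hK.exists_isMaxOn hne ((innerCont x).continuousOn)
  refine ⟨y, hy, le_antisymm (suppFn_le hne fun z hz => hmax hz) (le_suppFn hK hy)⟩

lemma suppFn_add {K L : Set E} (hK : IsCompact K) (hKne : K.Nonempty)
    (hL : IsCompact L) (hLne : L.Nonempty) (x : E) :
    suppFn (K + L) x = suppFn K x + suppFn L x := by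
  refine le_antisymm ?_ ?_
  · refine suppFn_le (hKne.add hLne) ?_
    rintro y ⟨a, ha, b, hb, rfl⟩
    rw [inner_add_right]
    exact add_le_add (le_suppFn hK ha) (le_suppFn hL hb)
  · obtain ⟨a, ha, hea⟩ := exists_suppFn_eq hK hKne x
    obtain ⟨b, hb, heb⟩ := exists_suppFn_eq hL hLne x
    rw [hea, heb, ← inner_add_right]
    exact le_suppFn (hK.add hL) (Set.add_mem_add ha hb)

lemma suppFn_smul {K : Set E} (hK : IsCompact K) (hne : K.Nonempty)
    {α : ℝ} (hα : 0 ≤ α) (x : E) : suppFn (α • K) x = α * suppFn K x := by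
  refine le_antisymm ?_ ?_
  · refine suppFn_le (hne.smul_set) ?_
    rintro y ⟨a, ha, rfl⟩
    rw [real_inner_smul_right]
    exact mul_le_mul_of_nonneg_left (le_suppFn hK ha) hα
  · obtain ⟨a, ha, hea⟩ := exists_suppFn_eq hK hne x
    rw [hea, ← real_inner_smul_right]
    exact le_suppFn (hK.smul α) (Set.smul_mem_smul_set ha)

lemma isCompact_convexHull_union {K L : Set E} (hK : IsCompact K) (hKc : Convex ℝ K)
    (hKne : K.Nonempty) (hL : IsCompact L) (hLc : Convex ℝ L) (hLne : L.Nonempty) :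
    IsCompact (convexHull ℝ (K ∪ L)) := by
  rw [hKc.convexHull_union hLc hKne hLne]
  have : convexJoin ℝ K L =
      (fun p : ℝ × E × E => (1 - p.1) • p.2.1 + p.1 • p.2.2) ''
        ((Set.Icc (0:ℝ) 1) ×ˢ K ×ˢ L) := by
    ext y
    constructor
    · intro hy
      rw [mem_convexJoin] at hy
      obtain ⟨a, ha, b, hb, hseg⟩ := hy
      rw [segment_eq_image] at hseg
      obtain ⟨θ, hθ, rfl⟩ := hseg
      exact ⟨(θ, a, b), ⟨hθ, ha, hb⟩, rfl⟩
    · rintro ⟨⟨θ, a, b⟩, ⟨hθ, ha, hb⟩, rfl⟩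
      rw [mem_convexJoin]
      exact ⟨a, ha, b, hb, by rw [segment_eq_image]; exact ⟨θ, hθ, rfl⟩⟩
  rw [this]
  exact ((isCompact_Icc.prod (hK.prod hL))).image <| by fun_prop

lemma suppFn_hull_union {K L : Set E} (hK : IsCompact K) (hKne : K.Nonempty)
    (hL : IsCompact L) (hLne : L.Nonempty) (x : E) :
    suppFn (convexHull ℝ (K ∪ L)) x = max (suppFn K x) (suppFn L x) := by
  have hsub : convexHull ℝ (K ∪ L) ⊆
      {y : E | (inner ℝ x y : ℝ) ≤ max (suppFn K x) (suppFn L x)} := by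
    refine convexHull_min ?_ ?_
    · rintro y (hy | hy)
      · exact le_max_of_le_left (le_suppFn hK hy)
      · exact le_max_of_le_right (le_suppFn hL hy)
    · exact convex_halfSpace_le
        ⟨fun a b => inner_add_right x a b, fun c a => real_inner_smul_right x a c⟩ _
  have hbdd : BddAbove ((fun y => (inner ℝ x y : ℝ)) '' convexHull ℝ (K ∪ L)) := by
    refine ⟨max (suppFn K x) (suppFn L x), ?_⟩
    rintro _ ⟨y, hy, rfl⟩
    exact hsub hy
  refine le_antisymm ?_ ?_
  · exact csSup_le ((hKne.mono (Set.subset_union_left.trans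
      (subset_convexHull ℝ _))).image _) (by rintro _ ⟨y, hy, rfl⟩; exact hsub hy)
  · refine max_le ?_ ?_
    · obtain ⟨a, ha, hea⟩ := exists_suppFn_eq hK hKne x
      rw [hea]
      exact le_csSup hbdd ⟨a, subset_convexHull ℝ _ (Set.mem_union_left _ ha), rfl⟩
    · obtain ⟨a, ha, hea⟩ := exists_suppFn_eq hL hLne x
      rw [hea]
      exact le_csSup hbdd ⟨a, subset_convexHull ℝ _ (Set.mem_union_right _ ha), rfl⟩

lemma smul_set_subset_smul_set {J : Set E} (hJ : Convex ℝ J) (h0 : (0:E) ∈ J)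
    {a c : ℝ} (ha : 0 ≤ a) (hac : a ≤ c) : a • J ⊆ c • J := by
  have h : (a + (c - a)) • J = a • J + (c - a) • J :=
    hJ.add_smul ha (sub_nonneg.2 hac)
  rw [add_sub_cancel] at h
  rw [h]
  intro y hy
  have : y + (c - a) • (0:E) ∈ a • J + (c - a) • J :=
    Set.add_mem_add hy (Set.smul_mem_smul_set h0)
  simpa using this

/-! #### Hausdorff-limit lemmas -/

lemma dist_tendsto {f : ℕ → NonemptyCompacts E} {P : NonemptyCompacts E}
    (hf : Tendsto f atTop (nhds P)) :
    Tendsto (fun n => hausdorffDist (f n : Set E) (P : Set E)) atTop (nhds 0) := by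
  have := (tendsto_iff_dist_tendsto_zero).1 hf
  simpa [NonemptyCompacts.dist_eq] using this

lemma mem_limit {f : ℕ → NonemptyCompacts E} {P : NonemptyCompacts E}
    (hf : Tendsto f atTop (nhds P)) {g : ℕ → E} (hg : ∀ n, g n ∈ (f n : Set E))
    {y : E} (hgy : Tendsto g atTop (nhds y)) : y ∈ (P : Set E) := by
  have hne : (P : Set E).Nonempty := P.nonempty
  rw [IsClosed.mem_iff_infDist_zero P.isCompact.isClosed hne]
  have hb : ∀ n : ℕ, infDist y (P : Set E) ≤
      dist y (g n) + hausdorffDist (f n : Set E) (P : Set E) := by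
    intro n
    have h1 : infDist y (P : Set E) ≤ infDist (g n) (P : Set E) + dist y (g n) :=
      infDist_le_infDist_add_dist
    have h2 : infDist (g n) (P : Set E) ≤ hausdorffDist (f n : Set E) (P : Set E) :=
      infDist_le_hausdorffDist_of_mem (hg n)
        (hausdorffEdist_ne_top_of_nonempty_of_bounded (f n).nonempty P.nonempty
          (f n).isCompact.isBounded P.isCompact.isBounded)
    linarith
  have hlim : Tendsto (fun n => dist y (g n) + hausdorffDist (f n : Set E) (P : Set E))
      atTop (nhds 0) := by
    have h1 : Tendsto (fun n => dist y (g n)) atTop (nhds 0) := by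
      have := (tendsto_iff_dist_tendsto_zero).1 hgy
      simpa [dist_comm] using this
    simpa using h1.add (dist_tendsto hf)
  have h0 : 0 ≤ infDist y (P : Set E) := infDist_nonneg
  have := ge_of_tendsto hlim (Eventually.of_forall hb)
  linarith

lemma approx_seq {f : ℕ → NonemptyCompacts E} {P : NonemptyCompacts E}
    (hf : Tendsto f atTop (nhds P)) {y : E} (hy : y ∈ (P : Set E)) :
    ∃ g : ℕ → E, (∀ n, g n ∈ (f n : Set E)) ∧ Tendsto g atTop (nhds y) := by
  have h : ∀ n : ℕ, ∃ z ∈ (f n : Set E), infDist y (f n : Set E) = dist y z := fun n =>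
    (f n).isCompact.exists_infDist_eq_dist (f n).nonempty y
  choose g hg hgd using h
  refine ⟨g, hg, ?_⟩
  rw [tendsto_iff_dist_tendsto_zero]
  have hb : ∀ n, dist (g n) y ≤ hausdorffDist (P : Set E) (f n : Set E) := by
    intro n
    rw [dist_comm, ← hgd n]
    exact infDist_le_hausdorffDist_of_mem hy
      (hausdorffEdist_ne_top_of_nonempty_of_bounded P.nonempty (f n).nonempty
        P.isCompact.isBounded (f n).isCompact.isBounded)
  refine squeeze_zero (fun n => dist_nonneg) hb ?_
  have := dist_tendsto hf
  simpa [hausdorffDist_comm] using this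

lemma suppFn_le_add {K L : Set E} (hK : IsCompact K) (hKne : K.Nonempty)
    (hL : IsCompact L) (hLne : L.Nonempty) (x : E) :
    suppFn K x ≤ suppFn L x + ‖x‖ * hausdorffDist K L := by
  refine csSup_le (hKne.image _) ?_
  rintro _ ⟨y, hy, rfl⟩
  obtain ⟨z, hz, hdz⟩ := hL.exists_infDist_eq_dist hLne y
  have h1 : infDist y L ≤ hausdorffDist K L :=
    infDist_le_hausdorffDist_of_mem hy
      (hausdorffEdist_ne_top_of_nonempty_of_bounded hKne hLne hK.isBounded hL.isBounded)
  have h2 : (inner ℝ x y : ℝ) = (inner ℝ x z : ℝ) + (inner ℝ x (y - z) : ℝ) := by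
    rw [inner_sub_right]; ring
  have h3 : (inner ℝ x (y - z) : ℝ) ≤ ‖x‖ * dist y z := by
    calc (inner ℝ x (y - z) : ℝ) ≤ ‖x‖ * ‖y - z‖ := real_inner_le_norm x _
    _ = ‖x‖ * dist y z := by rw [dist_eq_norm]
  have h4 : (inner ℝ x z : ℝ) ≤ suppFn L x := le_suppFn hL hz
  have h5 : ‖x‖ * dist y z ≤ ‖x‖ * hausdorffDist K L := by
    apply mul_le_mul_of_nonneg_left _ (norm_nonneg x)
    rw [← hdz]; exact h1
  linarith

lemma suppFn_tendsto {f : ℕ → NonemptyCompacts E} {P : NonemptyCompacts E}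
    (hf : Tendsto f atTop (nhds P)) (x : E) :
    Tendsto (fun n => suppFn (f n : Set E) x) atTop (nhds (suppFn (P : Set E) x)) := by
  rw [tendsto_iff_dist_tendsto_zero]
  refine squeeze_zero (fun n => dist_nonneg) (fun n => ?_)
    (by simpa using (dist_tendsto hf).const_mul ‖x‖)
  rw [Real.dist_eq, abs_le]
  constructor
  · have := suppFn_le_add P.isCompact P.nonempty (f n).isCompact (f n).nonempty x
    rw [hausdorffDist_comm] at this
    linarith
  · have := suppFn_le_add (f n).isCompact (f n).nonempty P.isCompact P.nonempty x
    linarith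

/-! #### Nondegeneracy consequences -/

variable {Ξ : Type*} [Nonempty Ξ]

/-- The closed convex hull of the normalized union. -/
noncomputable def Jset (S : Ξ → Set E) (x : E) : Set E :=
  closure (convexHull ℝ (⋃ ξ, (1 / suppFn (S ξ) x) • S ξ))

omit [Nonempty Ξ] in
lemma key_bound {S : Ξ → Set E} (hg : ∀ ξ, IsCompact (S ξ)) (hnd : Nondegenerate S)
    (hz : ∀ ξ, (0:E) ∈ S ξ) {x : E} (hx : x ≠ 0) (z : E) :
    ∃ C : ℝ, ∀ ξ, ∀ u ∈ S ξ, (inner ℝ z u : ℝ) ≤ C * suppFn (S ξ) x := by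
  have hx2 : (‖x‖:ℝ)^2 ≠ 0 := pow_ne_zero 2 (norm_ne_zero_iff.2 hx)
  set A : E →ₗ[ℝ] E :=
    { toFun := fun u => (((inner ℝ z u : ℝ)) / ‖x‖ ^ 2) • x
      map_add' := by
        intro a b
        simp only [inner_add_right, add_div, add_smul]
      map_smul' := by
        intro c a
        simp only [real_inner_smul_right, RingHom.id_apply, mul_div_assoc, mul_smul] } with hA
  obtain ⟨C, hC⟩ := hnd A
  refine ⟨C, fun ξ u hu => ?_⟩
  obtain ⟨β, hβ0, hβC, hmem⟩ := hC ξ u hu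
  obtain ⟨s, hs, hAu⟩ := hmem
  have h1 : (inner ℝ x (A u) : ℝ) = (inner ℝ z u : ℝ) := by
    show (inner ℝ x ((((inner ℝ z u : ℝ)) / ‖x‖ ^ 2) • x) : ℝ) = _
    rw [real_inner_smul_right, real_inner_self_eq_norm_sq]
    field_simp
  have h2 : (inner ℝ x (A u) : ℝ) = β * (inner ℝ x s : ℝ) := by
    rw [← hAu, real_inner_smul_right]
  have h3 : (inner ℝ x s : ℝ) ≤ suppFn (S ξ) x := le_suppFn (hg ξ) hs
  have h4 : 0 ≤ suppFn (S ξ) x := suppFn_nonneg (hg ξ) (hz ξ) x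
  calc (inner ℝ z u : ℝ) = β * (inner ℝ x s : ℝ) := by rw [← h1, h2]
    _ ≤ β * suppFn (S ξ) x := mul_le_mul_of_nonneg_left h3 hβ0.le
    _ ≤ C * suppFn (S ξ) x := mul_le_mul_of_nonneg_right hβC h4

omit [Nonempty Ξ] in
lemma suppFn_pos {S : Ξ → Set E} (hg : ∀ ξ, IsCompact (S ξ)) (hz : ∀ ξ, (0:E) ∈ S ξ)
    (hnz : ∀ ξ, S ξ ≠ {0}) (hnd : Nondegenerate S) {x : E} (hx : x ≠ 0) (ξ : Ξ) :
    0 < suppFn (S ξ) x := by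
  obtain ⟨v, hv, hv0⟩ : ∃ v ∈ S ξ, v ≠ 0 := by
    by_contra h
    push_neg at h
    exact hnz ξ (Set.eq_singleton_iff_unique_mem.2 ⟨hz ξ, fun y hy => h y hy⟩)
  obtain ⟨C, hC⟩ := key_bound hg hnd hz hx v
  have h1 : (inner ℝ v v : ℝ) ≤ C * suppFn (S ξ) x := hC ξ v hv
  have h2 : (0:ℝ) < (inner ℝ v v : ℝ) := by
    rw [real_inner_self_eq_norm_sq]
    exact pow_pos (norm_pos_iff.2 hv0) 2
  rcases lt_or_eq_of_le (suppFn_nonneg (hg ξ) (hz ξ) x) with h | h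
  · exact h
  · exfalso; rw [← h, mul_zero] at h1; linarith

omit [Nonempty Ξ] in
lemma Jset_convex (S : Ξ → Set E) (x : E) : Convex ℝ (Jset S x) :=
  (convex_convexHull ℝ _).closure

lemma Jset_zero_mem (S : Ξ → Set E) (x : E) (h0 : ∀ ξ, (0:E) ∈ S ξ) :
    (0:E) ∈ Jset S x := by
  obtain ⟨ξ⟩ := (inferInstance : Nonempty Ξ)
  refine subset_closure (subset_convexHull ℝ _ ?_)
  refine Set.mem_iUnion.2 ⟨ξ, ?_⟩
  exact ⟨0, h0 ξ, smul_zero _⟩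

omit [Nonempty Ξ] in
lemma Jset_isCompact (S : Ξ → Set E) (x : E)
    (hpos : ∀ ξ, 0 < suppFn (S ξ) x)
    (hkey : ∀ z : E, ∃ C : ℝ, ∀ ξ, ∀ u ∈ S ξ, (inner ℝ z u : ℝ) ≤ C * suppFn (S ξ) x) :
    IsCompact (Jset S x) := by
  refine isCompact_of_isClosed_isBounded isClosed_closure ?_
  refine (Bornology.IsBounded.closure ?_)
  rw [isBounded_convexHull]
  rw [isBounded_iff_forall_norm_le]
  have hB : ∀ i : Fin N, ∃ B : ℝ, ∀ ξ, ∀ u ∈ S ξ,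
      |(u : EuclideanSpace ℝ (Fin N)) i| ≤ B * suppFn (S ξ) x := by
    intro i
    obtain ⟨C₁, hC₁⟩ := hkey (EuclideanSpace.single i 1)
    obtain ⟨C₂, hC₂⟩ := hkey (-EuclideanSpace.single i 1)
    refine ⟨max C₁ C₂, fun ξ u hu => ?_⟩
    have hs : 0 ≤ suppFn (S ξ) x := (hpos ξ).le
    have e1 : (inner ℝ (EuclideanSpace.single i (1:ℝ)) u : ℝ) = u i := by
      rw [EuclideanSpace.inner_single_left]; simp
    have e2 : (inner ℝ (-EuclideanSpace.single i (1:ℝ)) u : ℝ) = -(u i) := by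
      rw [inner_neg_left, e1]
    rw [abs_le]
    constructor
    · have := hC₂ ξ u hu
      rw [e2] at this
      have h2 : C₂ * suppFn (S ξ) x ≤ max C₁ C₂ * suppFn (S ξ) x :=
        mul_le_mul_of_nonneg_right (le_max_right _ _) hs
      linarith
    · have := hC₁ ξ u hu
      rw [e1] at this
      have h2 : C₁ * suppFn (S ξ) x ≤ max C₁ C₂ * suppFn (S ξ) x :=
        mul_le_mul_of_nonneg_right (le_max_left _ _) hs
      linarith
  choose B hB using hB
  refine ⟨Real.sqrt (∑ i : Fin N, |B i| ^ 2), ?_⟩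
  rintro w hw
  obtain ⟨ξ, hwξ⟩ := Set.mem_iUnion.1 hw
  obtain ⟨u, hu, rfl⟩ := hwξ
  rw [EuclideanSpace.norm_eq]
  refine Real.sqrt_le_sqrt ?_
  refine Finset.sum_le_sum fun i _ => ?_
  have hcoord : ‖((1 / suppFn (S ξ) x) • u : EuclideanSpace ℝ (Fin N)) i‖ ≤ |B i| := by
    have hsmul : ((1 / suppFn (S ξ) x) • u : EuclideanSpace ℝ (Fin N)) i
        = (1 / suppFn (S ξ) x) * u i := rfl
    rw [hsmul, Real.norm_eq_abs, abs_mul, abs_of_pos (one_div_pos.2 (hpos ξ))]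
    rw [div_mul_eq_mul_div, one_mul, div_le_iff₀ (hpos ξ)]
    calc |u i| ≤ B i * suppFn (S ξ) x := hB i ξ u hu
      _ ≤ |B i| * suppFn (S ξ) x := mul_le_mul_of_nonneg_right (le_abs_self _) (hpos ξ).le
  calc ‖((1 / suppFn (S ξ) x) • u : EuclideanSpace ℝ (Fin N)) i‖ ^ 2 ≤ |B i| ^ 2 :=
    pow_le_pow_left₀ (norm_nonneg _) hcoord 2
  _ = |B i| ^ 2 := rfl

omit [Nonempty Ξ] in
lemma Jset_inner_le_one (S : Ξ → Set E) (x : E) (hg : ∀ ξ, IsCompact (S ξ))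
    (hpos : ∀ ξ, 0 < suppFn (S ξ) x) : ∀ w ∈ Jset S x, (inner ℝ x w : ℝ) ≤ 1 := by
  have hsub : Jset S x ⊆ {w : E | (inner ℝ x w : ℝ) ≤ 1} := by
    refine closure_minimal (convexHull_min ?_ ?_) ?_
    · rintro w hw
      obtain ⟨ξ, hwξ⟩ := Set.mem_iUnion.1 hw
      obtain ⟨u, hu, rfl⟩ := hwξ
      have h1 : (inner ℝ x u : ℝ) ≤ suppFn (S ξ) x := le_suppFn (hg ξ) hu
      show (inner ℝ x ((1 / suppFn (S ξ) x) • u) : ℝ) ≤ 1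
      rw [real_inner_smul_right, div_mul_eq_mul_div, one_mul, div_le_one (hpos ξ)]
      exact h1
    · exact convex_halfSpace_le
        ⟨fun a b => inner_add_right x a b, fun c a => real_inner_smul_right x a c⟩ _
    · exact isClosed_le (continuous_const.inner continuous_id) continuous_const
  exact fun w hw => hsub hw

omit [Nonempty Ξ] in
lemma subset_suppFn_smul_Jset (S : Ξ → Set E) (x : E)
    (hpos : ∀ ξ, 0 < suppFn (S ξ) x) (ξ : Ξ) :
    S ξ ⊆ suppFn (S ξ) x • Jset S x := by
  intro u hu
  have hmem : (1 / suppFn (S ξ) x) • u ∈ Jset S x :=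
    subset_closure (subset_convexHull ℝ _ (Set.mem_iUnion.2 ⟨ξ, ⟨u, hu, rfl⟩⟩))
  refine Set.mem_smul_set.2 ⟨(1 / suppFn (S ξ) x) • u, hmem, ?_⟩
  rw [smul_smul, mul_one_div, div_self (hpos ξ).ne', one_smul]

end PiUpAux
/-- **(4.2.2).**  Every nonzero gauge `T ∈ π↑(Ξ)` satisfies
`T = ⋂_{x ≠ 0} h_T(x) • J(x)` where `J(x)` is the closed convex hull of
`⋃_ξ (1/h_{S ξ}(x)) • S ξ`. -/
theorem piUp_simple_representation {N : ℕ} {Ξ : Type*} [Nonempty Ξ]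
    (S : Ξ → Set (EuclideanSpace ℝ (Fin N)))
    (hg : ∀ ξ, IsGauge (S ξ))
    (hnz : ∀ ξ, S ξ ≠ {0})
    (hsymm : ∀ ξ, S ξ = -S ξ)
    (hnd : Nondegenerate S)
    (T : Set (EuclideanSpace ℝ (Fin N))) (hT : IsGauge T) (hTnz : T ≠ {0})
    (hTmem : T ∈ piUp (Set.range S)) :
    T = ⋂ (x : EuclideanSpace ℝ (Fin N)) (_ : x ≠ 0),
        suppFn T x •
          closure (convexHull ℝ (⋃ ξ, (1 / suppFn (S ξ) x) • S ξ)) := by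
  classical
  open PiUpAux in
  have hgc : ∀ ξ, IsCompact (S ξ) := fun ξ => (hg ξ).1
  have h0S : ∀ ξ, (0 : EuclideanSpace ℝ (Fin N)) ∈ S ξ := fun ξ => (hg ξ).2.2
  have hJconv : ∀ x, Convex ℝ (PiUpAux.Jset S x) := fun x => PiUpAux.Jset_convex S x
  have hJ0 : ∀ x, (0 : EuclideanSpace ℝ (Fin N)) ∈ PiUpAux.Jset S x :=
    fun x => PiUpAux.Jset_zero_mem S x h0S
  have hpos : ∀ x : EuclideanSpace ℝ (Fin N), x ≠ 0 → ∀ ξ, 0 < suppFn (S ξ) x :=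
    fun x hx ξ => PiUpAux.suppFn_pos hgc h0S hnz hnd hx ξ
  have hJcomp : ∀ x : EuclideanSpace ℝ (Fin N), x ≠ 0 → IsCompact (PiUpAux.Jset S x) :=
    fun x hx => PiUpAux.Jset_isCompact S x (hpos x hx)
      (fun z => PiUpAux.key_bound hgc hnd h0S hx z)
  set C₀ : Set (Set (EuclideanSpace ℝ (Fin N))) :=
    {K | IsGauge K ∧ ∀ x : EuclideanSpace ℝ (Fin N), x ≠ 0 →
        K ⊆ suppFn K x • PiUpAux.Jset S x} with hC₀def
  have hmemC : (∀ K ∈ C₀, IsGauge K) ∧ IsHausdorffClosed C₀ ∧ Set.range S ⊆ C₀ ∧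
      (∀ K ∈ C₀, ∀ L ∈ C₀, K + L ∈ C₀) ∧
      (∀ K ∈ C₀, ∀ α : ℝ, 0 ≤ α → α • K ∈ C₀) ∧
      (∀ K ∈ C₀, ∀ L ∈ C₀, convexHull ℝ (K ∪ L) ∈ C₀) := by
    refine ⟨fun K hK => hK.1, ?_, ?_, ?_, ?_, ?_⟩
    · -- Hausdorff closed
      refine IsSeqClosed.isClosed ?_
      intro f P hfmem hft
      have hfg : ∀ n, IsGauge (f n : Set (EuclideanSpace ℝ (Fin N))) := fun n => (hfmem n).1
      refine ⟨⟨P.isCompact, ?_, ?_⟩, ?_⟩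
      · -- convexity of limit
        intro a ha b hb ta tb hta htb htab
        obtain ⟨ga, hga, hgal⟩ := PiUpAux.approx_seq hft ha
        obtain ⟨gb, hgb, hgbl⟩ := PiUpAux.approx_seq hft hb
        refine PiUpAux.mem_limit hft
          (g := fun n => ta • ga n + tb • gb n)
          (fun n => (hfg n).2.1 (hga n) (hgb n) hta htb htab) ?_
        exact (hgal.const_smul ta).add (hgbl.const_smul tb)
      · exact PiUpAux.mem_limit hft (fun n => (hfg n).2.2) tendsto_const_nhds
      · intro x hx y hy
        obtain ⟨g, hgmem, hgl⟩ := PiUpAux.approx_seq hft hy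
        have hc := PiUpAux.suppFn_tendsto hft x
        have hchoice : ∀ n, ∃ j ∈ PiUpAux.Jset S x,
            g n = suppFn (f n : Set (EuclideanSpace ℝ (Fin N))) x • j := by
          intro n
          obtain ⟨j, hj, hje⟩ := Set.mem_smul_set.1 ((hfmem n).2 x hx (hgmem n))
          exact ⟨j, hj, hje.symm⟩
        choose j hjmem hje using hchoice
        obtain ⟨j₀, hj₀, φ, hφ, hjconv⟩ := (hJcomp x hx).tendsto_subseq hjmem
        have h1 : Filter.Tendsto
            (fun k => suppFn ((f (φ k)) : Set (EuclideanSpace ℝ (Fin N))) x • j (φ k))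
            Filter.atTop (nhds (suppFn (P : Set (EuclideanSpace ℝ (Fin N))) x • j₀)) :=
          (hc.comp hφ.tendsto_atTop).smul hjconv
        have h2 : Filter.Tendsto (fun k => g (φ k)) Filter.atTop (nhds y) :=
          hgl.comp hφ.tendsto_atTop
        have heq : (fun k => g (φ k)) =
            fun k => suppFn ((f (φ k)) : Set (EuclideanSpace ℝ (Fin N))) x • j (φ k) := by
          funext k; exact hje (φ k)
        rw [heq] at h2
        have : y = suppFn (P : Set (EuclideanSpace ℝ (Fin N))) x • j₀ :=
          tendsto_nhds_unique h2 h1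
        exact Set.mem_smul_set.2 ⟨j₀, hj₀, this.symm⟩
    · -- contains the family
      rintro _ ⟨ξ, rfl⟩
      exact ⟨hg ξ, fun x hx => PiUpAux.subset_suppFn_smul_Jset S x (hpos x hx) ξ⟩
    · -- sums
      rintro K ⟨⟨hKco, hKcv, hK0⟩, hKP⟩ L ⟨⟨hLco, hLcv, hL0⟩, hLP⟩
      refine ⟨⟨hKco.add hLco, hKcv.add hLcv, by simpa using Set.add_mem_add hK0 hL0⟩, ?_⟩
      intro x hx
      rw [PiUpAux.suppFn_add hKco ⟨0, hK0⟩ hLco ⟨0, hL0⟩,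
        (hJconv x).add_smul (PiUpAux.suppFn_nonneg hKco hK0 x)
          (PiUpAux.suppFn_nonneg hLco hL0 x)]
      exact Set.add_subset_add (hKP x hx) (hLP x hx)
    · -- scalar multiples
      rintro K ⟨⟨hKco, hKcv, hK0⟩, hKP⟩ α hα
      refine ⟨⟨hKco.smul α, hKcv.smul α, ⟨0, hK0, smul_zero α⟩⟩, ?_⟩
      intro x hx
      rw [PiUpAux.suppFn_smul hKco ⟨0, hK0⟩ hα x, mul_smul]
      exact Set.smul_set_mono (hKP x hx)
    · -- joins
      rintro K ⟨⟨hKco, hKcv, hK0⟩, hKP⟩ L ⟨⟨hLco, hLcv, hL0⟩, hLP⟩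
      refine ⟨⟨PiUpAux.isCompact_convexHull_union hKco hKcv ⟨0, hK0⟩ hLco hLcv ⟨0, hL0⟩,
        convex_convexHull ℝ _, subset_convexHull ℝ _ (Set.mem_union_left _ hK0)⟩, ?_⟩
      intro x hx
      rw [PiUpAux.suppFn_hull_union hKco ⟨0, hK0⟩ hLco ⟨0, hL0⟩ x]
      refine convexHull_min ?_ ((hJconv x).smul _)
      rintro y (hy | hy)
      · exact PiUpAux.smul_set_subset_smul_set (hJconv x) (hJ0 x)
          (PiUpAux.suppFn_nonneg hKco hK0 x) (le_max_left _ _) (hKP x hx hy)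
      · exact PiUpAux.smul_set_subset_smul_set (hJconv x) (hJ0 x)
          (PiUpAux.suppFn_nonneg hLco hL0 x) (le_max_right _ _) (hLP x hx hy)
  have hTC : T ∈ C₀ := Set.mem_sInter.1 hTmem C₀ hmemC
  apply Set.Subset.antisymm
  · exact Set.subset_iInter₂ fun x hx => hTC.2 x hx
  · intro y hy
    by_contra hyT
    obtain ⟨f, u, hfu, huy⟩ := geometric_hahn_banach_closed_point hT.2.1 hT.1.isClosed hyT
    set x : EuclideanSpace ℝ (Fin N) :=
      (InnerProductSpace.toDual ℝ (EuclideanSpace ℝ (Fin N))).symm f with hxdef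
    have hfw : ∀ w, (inner ℝ x w : ℝ) = f w := fun w => InnerProductSpace.toDual_symm_apply
    have hTu : suppFn T x ≤ u :=
      PiUpAux.suppFn_le ⟨0, hT.2.2⟩ fun w hw => (hfw w) ▸ (hfu w hw).le
    have hs0 : 0 ≤ suppFn T x := PiUpAux.suppFn_nonneg hT.1 hT.2.2 x
    have hx0 : x ≠ 0 := by
      intro h
      have h1 : (inner ℝ x y : ℝ) = 0 := by rw [h, inner_zero_left]
      rw [hfw y] at h1
      linarith
    have hym : y ∈ suppFn T x • PiUpAux.Jset S x := Set.mem_iInter₂.1 hy x hx0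
    obtain ⟨j, hj, rfl⟩ := Set.mem_smul_set.1 hym
    have hj1 : (inner ℝ x j : ℝ) ≤ 1 :=
      PiUpAux.Jset_inner_le_one S x hgc (hpos x hx0) j hj
    have hle : f (suppFn T x • j) ≤ suppFn T x := by
      rw [← hfw, real_inner_smul_right]
      calc suppFn T x * (inner ℝ x j : ℝ) ≤ suppFn T x * 1 :=
        mul_le_mul_of_nonneg_left hj1 hs0
      _ = suppFn T x := mul_one _
    linarith
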